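/- For any F ∈ ℝ^{3×3} with det F = 1 and r ≥ 1, the infimum over unit vectors n ∈ S² of Tr(Fᵀ ℓ_n^{-1} F), where ℓ_n^{-1} = r^{1/3}(I − ((r−1)/r) n⊗n), equals r^{1/3}( |F|² − ((r−1)/r) λ_M(F)² ), where λ_M(F) is the largest singular value of F and |F|² = Tr(FᵀF). Moreover, the infimum is attained. -/

import Mathlib

open Matrix

/-- Euclidean norm on `Fin 3 → ℝ`. -/
noncomputable def enorm3 (v : Fin 3 → ℝ) : ℝ := Real.sqrt (∑ i, (v i) ^ 2)

/-- Maximum singular value (operator norm) of a 3×3 real matrix. -/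
noncomputable def lamM (F : Matrix (Fin 3) (Fin 3) ℝ) : ℝ :=
  sSup {x | ∃ v : Fin 3 → ℝ, enorm3 v = 1 ∧ x = enorm3 (F.mulVec v)}

lemma enorm3_nonneg (v : Fin 3 → ℝ) : 0 ≤ enorm3 v := Real.sqrt_nonneg _

lemma enorm3_eq_norm (v : Fin 3 → ℝ) :
    enorm3 v = ‖(WithLp.equiv 2 (Fin 3 → ℝ)).symm v‖ := by
  rw [EuclideanSpace.norm_eq]
  simp [enorm3, Real.norm_eq_abs, sq_abs]

lemma enorm3_sq (v : Fin 3 → ℝ) : enorm3 v ^ 2 = ∑ i, (v i) ^ 2 := by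
  rw [enorm3, Real.sq_sqrt]
  positivity

lemma enorm3_smul (c : ℝ) (v : Fin 3 → ℝ) : enorm3 (c • v) = |c| * enorm3 v := by
  rw [enorm3_eq_norm, enorm3_eq_norm]
  have : (WithLp.equiv 2 (Fin 3 → ℝ)).symm (c • v) = c • (WithLp.equiv 2 (Fin 3 → ℝ)).symm v := by
    rfl
  rw [this, norm_smul, Real.norm_eq_abs]

lemma dot_self_eq (v : Fin 3 → ℝ) : v ⬝ᵥ v = enorm3 v ^ 2 := by
  rw [enorm3_sq]; simp [dotProduct, sq]

lemma dot_le (u w : Fin 3 → ℝ) : u ⬝ᵥ w ≤ enorm3 u * enorm3 w := by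
  have h := real_inner_le_norm ((WithLp.equiv 2 (Fin 3 → ℝ)).symm u)
      ((WithLp.equiv 2 (Fin 3 → ℝ)).symm w)
  rw [← enorm3_eq_norm, ← enorm3_eq_norm] at h
  simpa [PiLp.inner_apply, RCLike.inner_apply, dotProduct, mul_comm] using h

lemma exists_max (F : Matrix (Fin 3) (Fin 3) ℝ) :
    ∃ v : Fin 3 → ℝ, enorm3 v = 1 ∧
      IsGreatest {x | ∃ v : Fin 3 → ℝ, enorm3 v = 1 ∧ x = enorm3 (F.mulVec v)}
        (enorm3 (F.mulVec v)) := by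
  set E := EuclideanSpace ℝ (Fin 3)
  have hK : IsCompact (Metric.sphere (0 : E) 1) := isCompact_sphere 0 1
  have hne : (Metric.sphere (0 : E) 1).Nonempty :=
    NormedSpace.sphere_nonempty.mpr zero_le_one
  set g : E → ℝ := fun w => ‖Matrix.toEuclideanLin F w‖ with hg
  have hgc : Continuous g :=
    continuous_norm.comp (Matrix.toEuclideanLin F).continuous_of_finiteDimensional
  obtain ⟨w₀, hw₀K, hmax⟩ := hK.exists_isMaxOn hne hgc.continuousOn
  refine ⟨WithLp.equiv 2 (Fin 3 → ℝ) w₀, ?_, ?_, ?_⟩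
  · rw [enorm3_eq_norm]
    simpa using mem_sphere_zero_iff_norm.mp hw₀K
  · exact ⟨_, by rw [enorm3_eq_norm]; simpa using mem_sphere_zero_iff_norm.mp hw₀K, rfl⟩
  · rintro x ⟨v, hv, rfl⟩
    have hv' : (WithLp.equiv 2 (Fin 3 → ℝ)).symm v ∈ Metric.sphere (0 : E) 1 := by
      rw [mem_sphere_zero_iff_norm, ← enorm3_eq_norm]; exact hv
    have := hmax hv'
    simp only [hg, Matrix.toEuclideanLin_apply, ← enorm3_eq_norm] at this
    simpa [Matrix.toEuclideanLin_apply, enorm3_eq_norm] using this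

lemma transpose_norm_le (F : Matrix (Fin 3) (Fin 3) ℝ) (u : Fin 3 → ℝ) (hu : enorm3 u = 1)
    (M : ℝ) (hM0 : 0 ≤ M)
    (hM : ∀ x ∈ {x | ∃ v : Fin 3 → ℝ, enorm3 v = 1 ∧ x = enorm3 (F.mulVec v)}, x ≤ M) :
    enorm3 (Fᵀ.mulVec u) ≤ M := by
  set a := Fᵀ.mulVec u with ha
  rcases eq_or_ne (enorm3 a) 0 with h0 | h0
  · rw [h0]; exact hM0
  have hapos : 0 < enorm3 a := lt_of_le_of_ne (enorm3_nonneg a) (Ne.symm h0)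
  set v := (enorm3 a)⁻¹ • a with hv
  have hv1 : enorm3 v = 1 := by
    rw [hv, enorm3_smul, abs_of_pos (by positivity), inv_mul_cancel₀ h0]
  have hmem : enorm3 (F.mulVec v) ≤ M := hM _ ⟨v, hv1, rfl⟩
  have key : enorm3 a ≤ enorm3 (F.mulVec v) := by
    have h1 : u ⬝ᵥ F.mulVec v ≤ enorm3 u * enorm3 (F.mulVec v) := dot_le _ _
    rw [hu, one_mul] at h1
    have h2 : u ⬝ᵥ F.mulVec v = enorm3 a := by
      rw [Matrix.dotProduct_mulVec, ← Matrix.mulVec_transpose, ← ha, hv]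
      rw [dotProduct_smul, dot_self_eq]
      field_simp
      simp only [smul_eq_mul, one_div, sq]
      rw [← mul_assoc, inv_mul_cancel₀ h0, one_mul]
    linarith
  linarith

lemma lamM_transpose (F : Matrix (Fin 3) (Fin 3) ℝ) : lamM Fᵀ = lamM F := by
  obtain ⟨v₀, hv₀, hG⟩ := exists_max F
  obtain ⟨u₀, hu₀, hG'⟩ := exists_max Fᵀ
  have hF : lamM F = enorm3 (F.mulVec v₀) := hG.csSup_eq
  have hFt : lamM Fᵀ = enorm3 (Fᵀ.mulVec u₀) := hG'.csSup_eq
  rw [hF, hFt]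
  have h1 : enorm3 (Fᵀ.mulVec u₀) ≤ enorm3 (F.mulVec v₀) :=
    transpose_norm_le F u₀ hu₀ _ (enorm3_nonneg _) (fun x hx => hG.2 hx)
  have h2 : enorm3 (F.mulVec v₀) ≤ enorm3 (Fᵀ.mulVec u₀) := by
    have := transpose_norm_le Fᵀ v₀ hv₀ _ (enorm3_nonneg _) (fun x hx => hG'.2 hx)
    rwa [Matrix.transpose_transpose] at this
  linarith

lemma trace_val (c s : ℝ) (n : Fin 3 → ℝ) (F : Matrix (Fin 3) (Fin 3) ℝ) :
    (Fᵀ * (c • ((1 : Matrix (Fin 3) (Fin 3) ℝ) - s • Matrix.vecMulVec n n)) * F).trace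
      = c * ((∑ i, ∑ j, (F i j) ^ 2) - s * enorm3 (Fᵀ.mulVec n) ^ 2) := by
  rw [enorm3_sq]
  simp only [Matrix.trace, Matrix.diag, Matrix.mul_apply, Matrix.smul_apply, Matrix.sub_apply,
    Matrix.one_apply, Matrix.vecMulVec_apply, Matrix.transpose_apply, Matrix.mulVec, dotProduct,
    smul_eq_mul, Fin.sum_univ_three]
  norm_num [Fin.sum_univ_three, Fin.ext_iff]
  ring

/-- For `F ∈ ℝ^{3×3}` with `det F = 1` and `r ≥ 1`, the infimum over unit vectors
`n ∈ S²` of `Tr(Fᵀ ℓ_n⁻¹ F)`, where `ℓ_n⁻¹ = r^{1/3}(I − ((r−1)/r) n⊗n)`, equals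
`r^{1/3}(|F|² − ((r−1)/r) λ_M(F)²)`, and the infimum is attained (`IsLeast`). -/
theorem trace_inf_over_director (r : ℝ) (hr : 1 ≤ r)
    (F : Matrix (Fin 3) (Fin 3) ℝ) (hdet : F.det = 1) :
    IsLeast
      {x | ∃ n : Fin 3 → ℝ, enorm3 n = 1 ∧
        x = (Fᵀ * (r ^ ((1 : ℝ) / 3) •
              ((1 : Matrix (Fin 3) (Fin 3) ℝ) - ((r - 1) / r) • Matrix.vecMulVec n n)) * F).trace}
      (r ^ ((1 : ℝ) / 3) * ((∑ i, ∑ j, (F i j) ^ 2) - ((r - 1) / r) * (lamM F) ^ 2)) := by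
  have hr0 : (0 : ℝ) < r := lt_of_lt_of_le one_pos hr
  set c : ℝ := r ^ ((1 : ℝ) / 3) with hc
  have hc0 : 0 < c := Real.rpow_pos_of_pos hr0 _
  set s : ℝ := (r - 1) / r with hs
  have hs0 : 0 ≤ s := div_nonneg (by linarith) hr0.le
  obtain ⟨u₀, hu₀, hG⟩ := exists_max Fᵀ
  have hM : lamM F = enorm3 (Fᵀ.mulVec u₀) := by
    rw [← lamM_transpose F]; exact hG.csSup_eq
  constructor
  · exact ⟨u₀, hu₀, by rw [trace_val, hM]⟩
  · rintro x ⟨n, hn, rfl⟩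
    rw [trace_val]
    have hle : enorm3 (Fᵀ.mulVec n) ≤ lamM F := by
      rw [hM]; exact hG.2 ⟨n, hn, rfl⟩
    have hsq : enorm3 (Fᵀ.mulVec n) ^ 2 ≤ lamM F ^ 2 :=
      pow_le_pow_left₀ (enorm3_nonneg _) hle 2
    nlinarith [mul_le_mul_of_nonneg_left hsq hs0]
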